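/- Let A ∈ ℝ^{d×d} be Hurwitz stable (all eigenvalues have negative real part) and invertible. Then the block matrix M(α) = [[A, B],[(αμ/(CA⁻¹B))·C, 0]] at α = 0 has 0 as a simple eigenvalue with left eigenvector u_ℓ = (0,…,0,1) and right eigenvector u_r = (-A⁻¹B, 1)ᵀ, and the first-order perturbation of that zero eigenvalue in α is dλ/dα|_{α=0} = -μ. Consequently, for all sufficiently small α > 0, M(α) is Hurwitz stable. -/

import Mathlib

open Matrix

lemma spec_iff_det {n : Type*} [Fintype n] [DecidableEq n] (N : Matrix n n ℂ) (z : ℂ) :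
    z ∈ spectrum ℂ N ↔ (z • (1 : Matrix n n ℂ) - N).det = 0 := by
  rw [spectrum.mem_iff, Algebra.algebraMap_eq_smul_one, Matrix.isUnit_iff_isUnit_det,
    isUnit_iff_ne_zero, not_not]

lemma det_expand (d : ℕ) (A' : Matrix (Fin d) (Fin d) ℂ) (B' w : Fin d → ℂ) (t z : ℂ) :
    (z • (1 : Matrix (Fin d ⊕ Fin 1) (Fin d ⊕ Fin 1) ℂ) -
      Matrix.fromBlocks A' (Matrix.of fun i _ => B' i) (Matrix.of fun _ j => t * w j) 0).det
      = z * (z • (1 : Matrix (Fin d) (Fin d) ℂ) - A').det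
        + t * (Matrix.fromBlocks (z • (1 : Matrix (Fin d) (Fin d) ℂ) - A')
            (Matrix.of fun i (_ : Fin 1) => -B' i) (Matrix.of fun (_ : Fin 1) j => -(w j)) 0).det := by
  set S : Matrix (Fin d ⊕ Fin 1) (Fin d ⊕ Fin 1) ℂ :=
    z • (1 : Matrix (Fin d ⊕ Fin 1) (Fin d ⊕ Fin 1) ℂ) -
      Matrix.fromBlocks A' (Matrix.of fun i _ => B' i) 0 0 with hS
  have h1 : (z • (1 : Matrix (Fin d ⊕ Fin 1) (Fin d ⊕ Fin 1) ℂ) -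
      Matrix.fromBlocks A' (Matrix.of fun i _ => B' i) (Matrix.of fun _ j => t * w j) 0)
      = Matrix.updateRow S (Sum.inr 0) (S (Sum.inr 0) + t • Sum.elim (fun j => -(w j)) 0) := by
    ext i j
    rcases i with i | i
    · rw [Matrix.updateRow_ne (by simp)]
      rcases j with j | j <;> simp [hS]
    · have hi : i = 0 := Subsingleton.elim _ _
      subst hi
      rw [Matrix.updateRow_self]
      rcases j with j | j
      · simp [hS, Matrix.one_apply, mul_comm]
      · have hj : j = 0 := Subsingleton.elim _ _
        subst hj
        simp [hS, Matrix.one_apply]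
  have h2 : S = Matrix.fromBlocks (z • (1 : Matrix (Fin d) (Fin d) ℂ) - A')
      (Matrix.of fun i (_ : Fin 1) => -B' i) 0 (Matrix.of fun (_ _ : Fin 1) => z) := by
    ext i j
    rcases i with i | i <;> rcases j with j | j
    · simp [hS, Matrix.one_apply, Sum.inl.injEq]
    · simp [hS]
    · simp [hS]
    · have hi : i = 0 := Subsingleton.elim _ _
      have hj : j = 0 := Subsingleton.elim _ _
      subst hi; subst hj
      simp [hS, Matrix.one_apply]
  have h3 : Matrix.updateRow S (Sum.inr 0) (Sum.elim (fun j => -(w j)) 0)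
      = Matrix.fromBlocks (z • (1 : Matrix (Fin d) (Fin d) ℂ) - A')
          (Matrix.of fun i (_ : Fin 1) => -B' i) (Matrix.of fun (_ : Fin 1) j => -(w j)) 0 := by
    ext i j
    rcases i with i | i
    · rw [Matrix.updateRow_ne (by simp)]
      rcases j with j | j <;> simp [hS, Matrix.one_apply]
    · have hi : i = 0 := Subsingleton.elim _ _
      subst hi
      rw [Matrix.updateRow_self]
      rcases j with j | j <;> simp
  rw [h1, Matrix.det_updateRow_add, Matrix.det_updateRow_smul, Matrix.updateRow_eq_self, h3, h2,
    Matrix.det_fromBlocks_zero₂₁, Matrix.det_fin_one]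
  simp only [Matrix.of_apply]
  ring


noncomputable def qfun (d : ℕ) (A' : Matrix (Fin d) (Fin d) ℂ) : ℂ → ℂ :=
  fun z => (z • (1 : Matrix (Fin d) (Fin d) ℂ) - A').det

noncomputable def Dfun (d : ℕ) (A' : Matrix (Fin d) (Fin d) ℂ) (B' w : Fin d → ℂ) : ℂ → ℂ :=
  fun z => (Matrix.fromBlocks (z • (1 : Matrix (Fin d) (Fin d) ℂ) - A')
      (Matrix.of fun i (_ : Fin 1) => -B' i) (Matrix.of fun (_ : Fin 1) j => -(w j)) 0).det

lemma qfun_continuous (d : ℕ) (A' : Matrix (Fin d) (Fin d) ℂ) : Continuous (qfun d A') := by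
  apply Continuous.matrix_det
  apply continuous_matrix
  intro i j
  simp only [Matrix.sub_apply, Matrix.smul_apply, Matrix.one_apply, smul_eq_mul]
  fun_prop

lemma Dfun_continuous (d : ℕ) (A' : Matrix (Fin d) (Fin d) ℂ) (B' w : Fin d → ℂ) :
    Continuous (Dfun d A' B' w) := by
  apply Continuous.matrix_det
  apply continuous_matrix
  rintro (i | i) (j | j) <;>
    simp only [Matrix.fromBlocks_apply₁₁, Matrix.fromBlocks_apply₁₂, Matrix.fromBlocks_apply₂₁,
      Matrix.fromBlocks_apply₂₂, Matrix.sub_apply, Matrix.smul_apply, Matrix.one_apply,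
      smul_eq_mul, Matrix.of_apply, Matrix.zero_apply] <;>
    fun_prop

lemma Dfun_zero (d : ℕ) (A' : Matrix (Fin d) (Fin d) ℂ) (hA' : IsUnit A'.det)
    (B' w : Fin d → ℂ) :
    Dfun d A' B' w 0 = (w ⬝ᵥ A'⁻¹ *ᵥ B') * qfun d A' 0 := by
  have hneg : IsUnit (-A').det := by
    rw [Matrix.det_neg]
    exact (isUnit_one.neg.pow _).mul hA'
  haveI : Invertible (-A') := Matrix.invertibleOfIsUnitDet _ hneg
  have h0 : ((0 : ℂ) • (1 : Matrix (Fin d) (Fin d) ℂ) - A') = -A' := by simp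
  have hinvOf : ⅟(-A') = -(A'⁻¹) := by
    rw [Matrix.invOf_eq_nonsing_inv]
    apply Matrix.inv_eq_left_inv
    rw [neg_mul_neg, Matrix.nonsing_inv_mul A' hA']
  have hq0 : qfun d A' 0 = (-A').det := by rw [qfun, h0]
  rw [Dfun, h0, Matrix.det_fromBlocks₁₁, hinvOf, hq0, Matrix.det_fin_one]
  have hentry : ((Matrix.of fun (_ : Fin 1) j => -(w j)) * -A'⁻¹ *
      (Matrix.of fun i (_ : Fin 1) => -B' i)) 0 0 = -(w ⬝ᵥ A'⁻¹ *ᵥ B') := by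
    rw [Matrix.mul_apply]
    have hin : ∀ k, ((Matrix.of fun (_ : Fin 1) j => -(w j)) * -A'⁻¹) 0 k
        = ∑ j, w j * A'⁻¹ j k := by
      intro k
      rw [Matrix.mul_apply]
      exact Finset.sum_congr rfl fun j _ => by simp
    calc ∑ k, ((Matrix.of fun (_ : Fin 1) j => -(w j)) * -A'⁻¹) 0 k *
            (Matrix.of fun i (_ : Fin 1) => -B' i) k 0
        = ∑ k, ∑ j, -(w j * A'⁻¹ j k * B' k) := by
          refine Finset.sum_congr rfl fun k _ => ?_
          rw [hin k, Matrix.of_apply, Finset.sum_mul]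
          exact Finset.sum_congr rfl fun j _ => by ring
      _ = -∑ j, ∑ k, w j * A'⁻¹ j k * B' k := by
          rw [Finset.sum_comm]
          simp [Finset.sum_neg_distrib]
      _ = -(w ⬝ᵥ A'⁻¹ *ᵥ B') := by
          rw [dotProduct]
          congr 1
          refine Finset.sum_congr rfl fun j _ => ?_
          rw [Matrix.mulVec, dotProduct, Finset.mul_sum]
          exact Finset.sum_congr rfl fun k _ => by ring
  rw [Matrix.sub_apply, hentry, Matrix.zero_apply, zero_sub, neg_neg, mul_comm]

section
attribute [local instance] Matrix.linftyOpNormedRing Matrix.linftyOpNormedAlgebra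

lemma spectrum_bound_aux {n : Type*} [Fintype n] [DecidableEq n] (N E : Matrix n n ℂ) :
    ∃ R : ℝ, ∀ t : ℂ, ‖t‖ ≤ 1 → ∀ z ∈ spectrum ℂ (N + t • E), ‖z‖ ≤ R := by
  refine ⟨(‖N‖ + ‖E‖) * ‖(1 : Matrix n n ℂ)‖, fun t ht z hz => ?_⟩
  refine (spectrum.norm_le_norm_mul_of_mem hz).trans ?_
  have h1 : ‖N + t • E‖ ≤ ‖N‖ + ‖E‖ := by
    refine (norm_add_le _ _).trans ?_
    have : ‖t • E‖ ≤ ‖E‖ := by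
      rw [norm_smul]
      nlinarith [norm_nonneg E, norm_nonneg t]
    linarith
  exact mul_le_mul_of_nonneg_right h1 (norm_nonneg _)

end

theorem perturbation_of_zero_eigenvalue
    (d : ℕ) (A : Matrix (Fin d) (Fin d) ℝ) (B C : Fin d → ℝ)
    (hA : IsUnit A)
    (hHurwitz : ∀ z ∈ spectrum ℂ (A.map Complex.ofReal), z.re < 0)
    (hg : C ⬝ᵥ A⁻¹ *ᵥ B ≠ 0) (μ : ℝ) (hμ : 0 < μ)
    (M : ℝ → Matrix (Fin d ⊕ Fin 1) (Fin d ⊕ Fin 1) ℝ)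
    (hM : ∀ a, M a = Matrix.fromBlocks A
        (Matrix.of fun i _ => B i)
        (Matrix.of fun _ j => (a * μ / (C ⬝ᵥ A⁻¹ *ᵥ B)) * C j)
        0)
    (uℓ ur : Fin d ⊕ Fin 1 → ℝ)
    (huℓ : uℓ = Sum.elim (0 : Fin d → ℝ) (1 : Fin 1 → ℝ))
    (hur : ur = Sum.elim (-(A⁻¹ *ᵥ B)) (1 : Fin 1 → ℝ))
    (E : Matrix (Fin d ⊕ Fin 1) (Fin d ⊕ Fin 1) ℝ)
    (hE : E = Matrix.fromBlocks 0 0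
        (Matrix.of fun _ j => (μ / (C ⬝ᵥ A⁻¹ *ᵥ B)) * C j) 0) :
    (M 0) *ᵥ ur = 0 ∧
    uℓ ᵥ* (M 0) = 0 ∧
    Polynomial.rootMultiplicity 0 (Matrix.charpoly (M 0)) = 1 ∧
    uℓ ⬝ᵥ ur = 1 ∧
    uℓ ⬝ᵥ (E *ᵥ ur) = -μ ∧
    ∃ ᾱ > 0, ∀ a : ℝ, 0 < a → a < ᾱ →
      ∀ z ∈ spectrum ℂ ((M a).map Complex.ofReal), z.re < 0 := by
  have hAdet : IsUnit A.det := (Matrix.isUnit_iff_isUnit_det A).mp hA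
  have hAdet0 : A.det ≠ 0 := hAdet.ne_zero
  have hM0 : M 0 = Matrix.fromBlocks A (Matrix.of fun i _ => B i) 0 0 := by
    rw [hM 0]
    ext (i | i) (j | j) <;> simp
  refine ⟨?_, ?_, ?_, ?_, ?_, ?_⟩
  · -- right eigenvector
    have hAB : A *ᵥ (A⁻¹ *ᵥ B) = B := by
      rw [Matrix.mulVec_mulVec, Matrix.mul_nonsing_inv A hAdet, Matrix.one_mulVec]
    have h1 : A *ᵥ (-(A⁻¹ *ᵥ B)) + (Matrix.of fun i (_ : Fin 1) => B i) *ᵥ (1 : Fin 1 → ℝ) = 0 := by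
      have hB1 : (Matrix.of fun i (_ : Fin 1) => B i) *ᵥ (1 : Fin 1 → ℝ) = B := by
        ext i
        simp [Matrix.mulVec, dotProduct]
      rw [hB1, Matrix.mulVec_neg, hAB, neg_add_cancel]
    rw [hM0, hur, Matrix.fromBlocks_mulVec]
    ext (i | i)
    · simp [h1]
    · simp
  · -- left eigenvector
    rw [hM0, huℓ]
    ext (j | j)
    · simp [Matrix.vecMul_fromBlocks, Matrix.vecMul, dotProduct]
    · simp [Matrix.vecMul_fromBlocks, Matrix.vecMul, dotProduct]
  · -- root multiplicity
    rw [hM0, Matrix.charpoly_fromBlocks_zero₂₁]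
    have hcp1 : Matrix.charpoly (0 : Matrix (Fin 1) (Fin 1) ℝ) = Polynomial.X := by
      simp [Matrix.charpoly, Matrix.charmatrix, Matrix.det_fin_one]
    rw [hcp1]
    have heval : (Matrix.charpoly A).eval 0 ≠ 0 := by
      intro h
      apply hAdet0
      rw [Matrix.det_eq_sign_charpoly_coeff, Polynomial.coeff_zero_eq_eval_zero, h, mul_zero]
    have hne : Matrix.charpoly A ≠ 0 := fun h => heval (by simp [h])
    rw [Polynomial.rootMultiplicity_mul (mul_ne_zero hne Polynomial.X_ne_zero),
      Polynomial.rootMultiplicity_eq_zero (by simpa [Polynomial.IsRoot] using heval)]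
    have hX : Polynomial.rootMultiplicity (0 : ℝ) Polynomial.X = 1 := by
      simpa using Polynomial.rootMultiplicity_X_sub_C_self (R := ℝ) (x := 0)
    rw [hX]
  · -- normalization
    rw [huℓ, hur]
    simp [dotProduct, Fintype.sum_sum_type]
  · -- derivative value
    rw [huℓ, hur, hE, Matrix.fromBlocks_mulVec]
    simp [dotProduct, Fintype.sum_sum_type, Matrix.mulVec, Finset.mul_sum]
    set S := ∑ x : Fin d, ∑ i : Fin d, C x * (A⁻¹ x i * B i) with hSdef
    have hS0 : S ≠ 0 := by
      simpa [dotProduct, Matrix.mulVec, Finset.mul_sum] using hg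
    have hL : ∑ x : Fin d, ∑ i : Fin d, μ / S * C x * (A⁻¹ x i * B i) = μ / S * S := by
      rw [hSdef, Finset.mul_sum]
      exact Finset.sum_congr rfl fun x _ => by
        rw [Finset.mul_sum]
        exact Finset.sum_congr rfl fun i _ => by ring
    rw [hL, div_mul_cancel₀ μ hS0]
  · -- stability for small a
    by_contra hcon
    push_neg at hcon
    choose aseq ha0 halt zseq hzmem hzre using fun n : ℕ => hcon (1 / (n + 1)) (by positivity)
    set A' : Matrix (Fin d) (Fin d) ℂ := A.map Complex.ofReal with hA'def
    set B' : Fin d → ℂ := fun i => ((B i : ℝ) : ℂ) with hB'def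
    set w : Fin d → ℂ := fun j => ((μ / (C ⬝ᵥ A⁻¹ *ᵥ B) : ℝ) : ℂ) * ((C j : ℝ) : ℂ) with hwdef
    have hdetA' : A'.det = ((A.det : ℝ) : ℂ) := by
      rw [hA'def]
      have h := RingHom.map_det Complex.ofRealHom A
      simp [RingHom.mapMatrix_apply] at h
      exact h.symm
    have hdetA'0 : A'.det ≠ 0 := by
      rw [hdetA']
      exact_mod_cast hAdet0
    have hA'unit : IsUnit A'.det := isUnit_iff_ne_zero.mpr hdetA'0
    have hAinvmap : A'⁻¹ = (A⁻¹).map Complex.ofReal := by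
      apply Matrix.inv_eq_left_inv
      rw [hA'def]
      have : (A⁻¹).map Complex.ofReal * A.map Complex.ofReal = (A⁻¹ * A).map Complex.ofReal := by
        exact (Matrix.map_mul (f := Complex.ofRealHom)).symm
      rw [this, Matrix.nonsing_inv_mul A hAdet]
      exact Matrix.map_one _ Complex.ofReal_zero Complex.ofReal_one
    have hmap : ∀ a : ℝ, (M a).map Complex.ofReal
        = Matrix.fromBlocks A' (Matrix.of fun i (_ : Fin 1) => B' i)
            (Matrix.of fun (_ : Fin 1) j => ((a : ℝ) : ℂ) * w j) 0 := by
      intro a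
      rw [hM a]
      ext (i | i) (j | j) <;>
        simp [hA'def, hB'def, hwdef, Matrix.map_apply] <;> push_cast <;> ring
    have hspec : ∀ (a : ℝ) (z : ℂ), z ∈ spectrum ℂ ((M a).map Complex.ofReal) ↔
        z * qfun d A' z + ((a : ℝ) : ℂ) * Dfun d A' B' w z = 0 := by
      intro a z
      rw [spec_iff_det, hmap a, det_expand d A' B' w]
      rfl
    have hqspec : ∀ z : ℂ, qfun d A' z = 0 ↔ z ∈ spectrum ℂ A' :=
      fun z => (spec_iff_det A' z).symm
    have hq0 : qfun d A' 0 ≠ 0 := by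
      intro h
      have h2 := hHurwitz 0 ((hqspec 0).mp h)
      simp at h2
    have hwg : w ⬝ᵥ A'⁻¹ *ᵥ B' = ((μ : ℝ) : ℂ) := by
      rw [hAinvmap, hwdef, hB'def]
      have h1 : (fun j => ((μ / (C ⬝ᵥ A⁻¹ *ᵥ B) : ℝ) : ℂ) * ((C j : ℝ) : ℂ)) ⬝ᵥ
          ((A⁻¹).map Complex.ofReal) *ᵥ (fun i => ((B i : ℝ) : ℂ))
          = (((μ / (C ⬝ᵥ A⁻¹ *ᵥ B)) * (C ⬝ᵥ A⁻¹ *ᵥ B) : ℝ) : ℂ) := by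
        push_cast [dotProduct, Matrix.mulVec, Matrix.map_apply]
        rw [Finset.mul_sum]
        exact Finset.sum_congr rfl fun j _ => by ring
      rw [h1, div_mul_cancel₀ μ hg]
    have hD0 : Dfun d A' B' w 0 = ((μ : ℝ) : ℂ) * qfun d A' 0 := by
      rw [Dfun_zero d A' hA'unit B' w, hwg]
    have hroot : ∀ n : ℕ, zseq n * qfun d A' (zseq n)
        + ((aseq n : ℝ) : ℂ) * Dfun d A' B' w (zseq n) = 0 :=
      fun n => (hspec (aseq n) (zseq n)).mp (hzmem n)
    -- boundedness and convergent subsequence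
    obtain ⟨R, hR⟩ := spectrum_bound_aux ((M 0).map Complex.ofReal) (E.map Complex.ofReal)
    have hME : ∀ a : ℝ, (M a).map Complex.ofReal
        = (M 0).map Complex.ofReal + ((a : ℝ) : ℂ) • (E.map Complex.ofReal) := by
      intro a
      rw [hmap a, hmap 0, hE]
      ext (i | i) (j | j) <;>
        simp [hwdef, Matrix.map_apply] <;> push_cast <;> ring
    have halt1 : ∀ n : ℕ, aseq n ≤ 1 := by
      intro n
      refine (halt n).le.trans ?_
      rw [div_le_one (by positivity)]
      have : (0 : ℝ) ≤ (n : ℝ) := Nat.cast_nonneg n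
      linarith
    have hzbound : ∀ n : ℕ, zseq n ∈ Metric.closedBall (0 : ℂ) R := by
      intro n
      rw [Metric.mem_closedBall, dist_zero_right]
      refine hR ((aseq n : ℝ) : ℂ) ?_ (zseq n) ?_
      · rw [Complex.norm_real, Real.norm_eq_abs, abs_of_pos (ha0 n)]
        exact halt1 n
      · rw [← hME (aseq n)]
        exact hzmem n
    obtain ⟨zstar, _, φ, hφmono, hφtend⟩ :=
      (isCompact_closedBall (0 : ℂ) R).tendsto_subseq hzbound
    have haseq : Filter.Tendsto aseq Filter.atTop (nhds 0) := by
      refine squeeze_zero (fun n => (ha0 n).le) (fun n => (halt n).le) ?_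
      exact tendsto_one_div_add_atTop_nhds_zero_nat
    have haφ : Filter.Tendsto (fun k => aseq (φ k)) Filter.atTop (nhds 0) :=
      haseq.comp hφmono.tendsto_atTop
    have hqcont := qfun_continuous d A'
    have hDcont := Dfun_continuous d A' B' w
    -- the limit point is 0
    have hlim1 : Filter.Tendsto (fun k => zseq (φ k) * qfun d A' (zseq (φ k))
        + ((aseq (φ k) : ℝ) : ℂ) * Dfun d A' B' w (zseq (φ k))) Filter.atTop
        (nhds (zstar * qfun d A' zstar + 0 * Dfun d A' B' w zstar)) := by
      refine Filter.Tendsto.add ?_ ?_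
      · exact hφtend.mul ((hqcont.tendsto zstar).comp hφtend)
      · refine Filter.Tendsto.mul ?_ ((hDcont.tendsto zstar).comp hφtend)
        have := (Complex.continuous_ofReal.tendsto 0).comp haφ
        simpa [Function.comp_def] using this
    have hstar : zstar * qfun d A' zstar = 0 := by
      have hconst : (fun k => zseq (φ k) * qfun d A' (zseq (φ k))
          + ((aseq (φ k) : ℝ) : ℂ) * Dfun d A' B' w (zseq (φ k))) = fun _ => (0 : ℂ) :=
        funext fun k => hroot (φ k)
      rw [hconst] at hlim1
      have h2 := tendsto_nhds_unique hlim1 tendsto_const_nhds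
      simpa using h2.symm
    have hzstar_re : 0 ≤ zstar.re :=
      ge_of_tendsto ((Complex.continuous_re.tendsto zstar).comp hφtend)
        (Filter.Eventually.of_forall fun k => hzre (φ k))
    have hzstar0 : zstar = 0 := by
      rcases mul_eq_zero.mp hstar with h | h
      · exact h
      · exact absurd (hHurwitz zstar ((hqspec zstar).mp h)) (not_lt.mpr hzstar_re)
    rw [hzstar0] at hφtend
    -- ratio tends to μ
    have hratio : Filter.Tendsto
        (fun k => Dfun d A' B' w (zseq (φ k)) / qfun d A' (zseq (φ k)))
        Filter.atTop (nhds ((μ : ℝ) : ℂ)) := by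
      have h := Filter.Tendsto.div ((hDcont.tendsto 0).comp hφtend)
        ((hqcont.tendsto 0).comp hφtend) hq0
      rw [hD0, mul_div_assoc, div_self hq0, mul_one] at h
      exact h
    have hre : Filter.Tendsto
        (fun k => (Dfun d A' B' w (zseq (φ k)) / qfun d A' (zseq (φ k))).re)
        Filter.atTop (nhds μ) := by
      have h := (Complex.continuous_re.tendsto _).comp hratio
      simpa [Function.comp_def] using h
    have hev1 : ∀ᶠ k in Filter.atTop,
        0 < (Dfun d A' B' w (zseq (φ k)) / qfun d A' (zseq (φ k))).re :=
      hre.eventually (eventually_gt_nhds hμ)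
    have hev2 : ∀ᶠ k in Filter.atTop, qfun d A' (zseq (φ k)) ≠ 0 :=
      ((hqcont.tendsto 0).comp hφtend).eventually_ne hq0
    obtain ⟨k, hk1, hk2⟩ := (hev1.and hev2).exists
    have hzeq : zseq (φ k) = -(((aseq (φ k) : ℝ)) : ℂ) *
        (Dfun d A' B' w (zseq (φ k)) / qfun d A' (zseq (φ k))) := by
      have h := hroot (φ k)
      have h3 : -(((aseq (φ k) : ℝ)) : ℂ) *
          (Dfun d A' B' w (zseq (φ k)) / qfun d A' (zseq (φ k)))
          = (-(((aseq (φ k) : ℝ)) : ℂ) * Dfun d A' B' w (zseq (φ k))) /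
            qfun d A' (zseq (φ k)) := by ring
      rw [h3, eq_div_iff hk2]
      linear_combination h
    have hneg : (zseq (φ k)).re < 0 := by
      rw [hzeq]
      have h4 : (-(((aseq (φ k) : ℝ)) : ℂ) *
          (Dfun d A' B' w (zseq (φ k)) / qfun d A' (zseq (φ k)))).re
          = -(aseq (φ k)) * (Dfun d A' B' w (zseq (φ k)) / qfun d A' (zseq (φ k))).re := by
        rw [← Complex.ofReal_neg, Complex.re_ofReal_mul]
      rw [h4]
      nlinarith [ha0 (φ k), hk1]
    exact absurd (hzre (φ k)) (not_le.mpr hneg)
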